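/- Let ‖·‖ be a submultiplicative matrix norm on n×n complex matrices, let X be an n×n complex matrix with ‖X‖ < 1, and let m ≥ 2 be an integer. Then det(I + X) = exp( ∑_{r=1}^{m−1} ((−1)^{r+1}/r)·tr(X^r) + E_m(X) ), where E_m(X) is a complex number satisfying |E_m(X)| ≤ (n/m)·‖X‖^m/(1 − ‖X‖). -/

import Mathlib

open Matrix Finset

private lemma vecMulVec_mul_vecMulVec {k : ℕ} (u w u' w' : Fin k → ℂ) :
    vecMulVec u w * vecMulVec u' w' = (w ⬝ᵥ u') • vecMulVec u w' := by
  ext i j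
  simp only [Matrix.mul_apply, vecMulVec_apply, Matrix.smul_apply, dotProduct, smul_eq_mul,
    Finset.sum_mul]
  exact Finset.sum_congr rfl fun x _ => by ring

private lemma vecMulVec_mulVec {k : ℕ} (u w x : Fin k → ℂ) :
    vecMulVec u w *ᵥ x = (w ⬝ᵥ x) • u := by
  ext i
  simp only [mulVec, dotProduct, vecMulVec_apply, Pi.smul_apply, smul_eq_mul, Finset.sum_mul]
  exact Finset.sum_congr rfl fun x _ => by ring

/-- Triangularization consequences: a list of eigenvalues giving power traces and shifted
determinants. -/
private lemma exists_eig_list :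
    ∀ (k : ℕ) (A : Matrix (Fin k) (Fin k) ℂ), ∃ d : Fin k → ℂ,
      (∀ r : ℕ, (A ^ r).trace = ∑ i, d i ^ r) ∧
      (∀ z : ℂ, (A - z • 1).det = ∏ i, (d i - z)) := by
  intro k
  induction k with
  | zero =>
      intro A
      refine ⟨![], fun r => ?_, fun z => ?_⟩
      · simp [Matrix.trace]
      · simp [Matrix.det_fin_zero]
  | succ n ih =>
      intro A
      -- get an eigenvalue/eigenvector
      obtain ⟨μ, hμ⟩ := Module.End.exists_eigenvalue (Matrix.mulVecLin A)
      obtain ⟨v, hv⟩ := hμ.exists_hasEigenvector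
      have hvne : v ≠ 0 := hv.right
      have hAv : A *ᵥ v = μ • v := by
        have := hv.apply_eq_smul
        simpa [Matrix.mulVecLin_apply] using this
      obtain ⟨j, hj⟩ := Function.ne_iff.mp hvne
      -- swap index j to 0
      set τ : Equiv.Perm (Fin (n + 1)) := Equiv.swap 0 j with hτ
      set A₁ : Matrix (Fin (n + 1)) (Fin (n + 1)) ℂ := A.submatrix τ τ with hA₁
      set v₁ : Fin (n + 1) → ℂ := v ∘ τ with hv₁
      have hv₁0 : v₁ 0 ≠ 0 := by
        simpa [hv₁, hτ, Equiv.swap_apply_left] using hj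
      have hA₁v₁ : A₁ *ᵥ v₁ = μ • v₁ := by
        have hvs : v₁ ∘ τ.symm = v := by
          ext i; simp [hv₁]
        rw [hA₁, Matrix.submatrix_mulVec_equiv A v₁ τ τ, hvs, hAv]
        ext i; simp [hv₁]
      -- transfer statement from A₁ to A
      have hA₁pow : ∀ r : ℕ, (A₁ ^ r).trace = (A ^ r).trace := by
        intro r
        have h1 : A₁ = (Matrix.reindexAlgEquiv ℂ ℂ τ.symm) A := by
          simp [hA₁, Matrix.reindexAlgEquiv_apply, Matrix.reindex_apply]
        have h2 : A₁ ^ r = (Matrix.reindexAlgEquiv ℂ ℂ τ.symm) (A ^ r) := by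
          rw [h1, ← map_pow]
        rw [h2]
        simp only [Matrix.reindexAlgEquiv_apply, Matrix.reindex_apply, Equiv.symm_symm,
          Matrix.trace, Matrix.diag, Matrix.submatrix_apply]
        exact Equiv.sum_comp τ (fun i => (A ^ r) i i)
      have hA₁det : ∀ z : ℂ, (A₁ - z • 1).det = (A - z • 1).det := by
        intro z
        have h1 : A₁ - z • 1 = (A - z • 1).submatrix τ τ := by
          ext i j
          by_cases h : i = j <;>
            simp [hA₁, Matrix.submatrix_apply, Matrix.sub_apply, Matrix.smul_apply,
              Matrix.one_apply, h, τ.injective.eq_iff]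
        rw [h1, Matrix.det_submatrix_equiv_self]
      -- construct the conjugating matrices
      set e0 : Fin (n + 1) → ℂ := Pi.single 0 1 with he0
      set u : Fin (n + 1) → ℂ := v₁ - e0 with hu
      set V : Matrix (Fin (n + 1)) (Fin (n + 1)) ℂ := vecMulVec u e0 with hV
      set c : ℂ := (v₁ 0)⁻¹ with hc
      set P : Matrix (Fin (n + 1)) (Fin (n + 1)) ℂ := 1 + V with hP
      set Q : Matrix (Fin (n + 1)) (Fin (n + 1)) ℂ := 1 - c • V with hQ
      have he0u : e0 ⬝ᵥ u = v₁ 0 - 1 := by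
        rw [he0, single_dotProduct, one_mul, hu]
        simp [he0]
      have hVV : V * V = (v₁ 0 - 1) • V := by
        rw [hV, _root_.vecMulVec_mul_vecMulVec, ← hV, he0u]
      have hcv : c * v₁ 0 = 1 := inv_mul_cancel₀ hv₁0
      have hcv' : v₁ 0 * (v₁ 0)⁻¹ = 1 := mul_inv_cancel₀ hv₁0
      have hcomb1 : c + c * (v₁ 0 - 1) = 1 := by linear_combination hcv
      have hcomb2 : (1 : ℂ) - c * (v₁ 0 - 1) = c := by linear_combination -hcv
      have keyQP : c • V * P = V := by
        rw [hP, mul_add, mul_one, smul_mul_assoc, hVV, smul_smul, ← add_smul, hcomb1, one_smul]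
      have hQP : Q * P = 1 := by
        rw [hQ, sub_mul, one_mul, keyQP, hP, add_sub_cancel_right]
      have keyPQ : V * Q = c • V := by
        rw [hQ, mul_sub, mul_one, mul_smul_comm, hVV, smul_smul]
        nth_rewrite 1 [← one_smul ℂ V]
        rw [← sub_smul, hcomb2]
      have hPQ : P * Q = 1 := by
        rw [hP, add_mul, one_mul, keyPQ, hQ]
        abel
      set B : Matrix (Fin (n + 1)) (Fin (n + 1)) ℂ := Q * A₁ * P with hB
      -- the first column of B
      have hPe0 : P *ᵥ e0 = v₁ := by
        rw [hP, Matrix.add_mulVec, Matrix.one_mulVec, hV, _root_.vecMulVec_mulVec]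
        have : e0 ⬝ᵥ e0 = 1 := by simp [he0, single_dotProduct]
        rw [this, one_smul, hu]
        abel
      have hQv₁ : Q *ᵥ v₁ = e0 := by
        rw [hQ, Matrix.sub_mulVec, Matrix.one_mulVec, Matrix.smul_mulVec, hV,
          _root_.vecMulVec_mulVec]
        have : e0 ⬝ᵥ v₁ = v₁ 0 := by simp [he0, single_dotProduct]
        rw [this, smul_smul, hcv, one_smul, hu]
        abel
      have hBe0 : B *ᵥ e0 = μ • e0 := by
        rw [hB, ← Matrix.mulVec_mulVec, ← Matrix.mulVec_mulVec, hPe0, hA₁v₁,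
          Matrix.mulVec_smul, hQv₁]
      have hB0 : ∀ i, B i 0 = if i = 0 then μ else 0 := by
        intro i
        have := congrFun hBe0 i
        simp only [he0, Matrix.mulVec_single, mul_one, Pi.smul_apply, smul_eq_mul,
          MulOpposite.op_one, one_smul, Matrix.col_apply] at this
        rw [this]
        by_cases h : i = 0 <;> simp [h, Pi.single_apply]
      -- transfer from B to A₁
      have hBpow : ∀ r : ℕ, B ^ r = Q * A₁ ^ r * P := by
        intro r
        induction r with
        | zero => simp [hQP]
        | succ s ihs =>
            rw [pow_succ, ihs, pow_succ, hB]
            calc Q * A₁ ^ s * P * (Q * A₁ * P)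
                = Q * A₁ ^ s * (P * Q) * A₁ * P := by noncomm_ring
              _ = Q * (A₁ ^ s * A₁) * P := by rw [hPQ]; noncomm_ring
      have hBtr : ∀ r : ℕ, (B ^ r).trace = (A₁ ^ r).trace := by
        intro r
        rw [hBpow r, Matrix.trace_mul_comm, ← mul_assoc, hPQ, one_mul]
      have hBdet : ∀ z : ℂ, (B - z • 1).det = (A₁ - z • 1).det := by
        intro z
        have hdetQP : Q.det * P.det = 1 := by
          rw [← Matrix.det_mul, hQP, Matrix.det_one]
        have hz1 : Q * (z • 1) * P = z • 1 := by
          rw [Matrix.mul_smul, mul_one, Matrix.smul_mul, hQP]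
        have h1 : B - z • 1 = Q * (A₁ - z • 1) * P := by
          rw [Matrix.mul_sub, Matrix.sub_mul, hz1, hB]
        rw [h1, Matrix.det_mul, Matrix.det_mul, mul_comm Q.det, mul_assoc, hdetQP, mul_one]
      -- block decomposition
      set M : Matrix (Fin n) (Fin n) ℂ := B.submatrix Fin.succ Fin.succ with hM
      have hMapply : ∀ i j : Fin n, M i j = B i.succ j.succ := fun i j => rfl
      have hkey : ∀ r : ℕ, (B ^ r) 0 0 = μ ^ r ∧ (∀ i : Fin n, (B ^ r) i.succ 0 = 0) ∧
          (∀ i j : Fin n, (B ^ r) i.succ j.succ = (M ^ r) i j) := by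
        intro r
        induction r with
        | zero =>
            refine ⟨by simp, fun i => ?_, fun i j => ?_⟩
            · simp [Matrix.one_apply, Fin.succ_ne_zero]
            · simp [Matrix.one_apply, Fin.succ_inj]
        | succ s ihs =>
            obtain ⟨h00, hcol, hblk⟩ := ihs
            refine ⟨?_, fun i => ?_, fun i j => ?_⟩
            · rw [pow_succ, Matrix.mul_apply, Fin.sum_univ_succ]
              simp [hB0, Fin.succ_ne_zero, h00, pow_succ]
            · rw [pow_succ, Matrix.mul_apply, Fin.sum_univ_succ]
              simp [hB0, Fin.succ_ne_zero, hcol i]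
            · rw [pow_succ, Matrix.mul_apply, Fin.sum_univ_succ, hcol i, zero_mul, zero_add,
                pow_succ, Matrix.mul_apply]
              exact Finset.sum_congr rfl fun k _ => by rw [hblk i k, hMapply]
      have htrB : ∀ r : ℕ, (B ^ r).trace = μ ^ r + (M ^ r).trace := by
        intro r
        rw [Matrix.trace, Fin.sum_univ_succ]
        simp only [Matrix.diag_apply]
        rw [(hkey r).1]
        congr 1
        rw [Matrix.trace]
        exact Finset.sum_congr rfl fun i _ => (hkey r).2.2 i i
      have hdetB : ∀ z : ℂ, (B - z • 1).det = (μ - z) * (M - z • 1).det := by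
        intro z
        rw [Matrix.det_succ_column_zero, Fin.sum_univ_succ]
        have hz0 : ∀ i : Fin n, (B - z • 1) i.succ 0 = 0 := by
          intro i
          simp [Matrix.sub_apply, hB0, Fin.succ_ne_zero, Matrix.one_apply, Matrix.smul_apply]
        have h00 : (B - z • 1) 0 0 = μ - z := by
          simp [Matrix.sub_apply, hB0, Matrix.one_apply, Matrix.smul_apply]
        have hsub : (B - z • 1).submatrix (Fin.succAbove 0) Fin.succ = M - z • 1 := by
          ext i j
          by_cases h : i = j <;>
            simp [Matrix.submatrix_apply, Matrix.sub_apply, Matrix.smul_apply,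
              Matrix.one_apply, h, Fin.succ_inj, hMapply]
        rw [h00, hsub]
        simp only [hz0, mul_zero, zero_mul, Finset.sum_const_zero, add_zero, Fin.val_zero,
          pow_zero, one_mul]
      obtain ⟨d', hd'tr, hd'det⟩ := ih M
      refine ⟨Fin.cons μ d', fun r => ?_, fun z => ?_⟩
      · rw [← hA₁pow r, ← hBtr r, htrB r, Fin.sum_univ_succ, hd'tr r]
        simp
      · rw [← hA₁det z, ← hBdet z, hdetB z, Fin.prod_univ_succ, hd'det z]
        simp

theorem det_log_expansion (n m : ℕ) (hm : 2 ≤ m)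
    (N : Matrix (Fin n) (Fin n) ℂ → ℝ)
    (hN0 : ∀ A, N A = 0 ↔ A = 0)
    (hNadd : ∀ A B, N (A + B) ≤ N A + N B)
    (hNsmul : ∀ (c : ℂ) (A), N (c • A) = ‖c‖ * N A)
    (hNmul : ∀ A B, N (A * B) ≤ N A * N B)
    (X : Matrix (Fin n) (Fin n) ℂ) (hX : N X < 1) :
    ∃ E : ℂ,
      (1 + X).det =
        Complex.exp ((∑ r ∈ Finset.Icc 1 (m - 1), ((-1 : ℂ) ^ (r + 1) / r) * (X ^ r).trace)
          + E) ∧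
      ‖E‖ ≤ (n / m) * N X ^ m / (1 - N X) := by
  obtain ⟨d, htr, hdet⟩ := exists_eig_list n X
  have hmpos : (0 : ℝ) < m := by positivity
  have hm0 : (m : ℝ) ≠ 0 := by positivity
  have h1x : (0 : ℝ) < 1 - N X := by linarith
  -- nonnegativity of N
  have hN0' : N 0 = 0 := (hN0 0).mpr rfl
  have hNXnn : 0 ≤ N X := by
    have h2 : (0 : ℝ) ≤ N X + N ((-1 : ℂ) • X) := by
      rw [← hN0']
      have : (0 : Matrix (Fin n) (Fin n) ℂ) = X + (-1 : ℂ) • X := by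
        simp
      rw [this]
      exact hNadd _ _
    rw [hNsmul] at h2
    simp at h2
    linarith
  -- eigenvalue bound
  have hdle : ∀ i, ‖d i‖ ≤ N X := by
    intro i
    have hdet0 : (X - d i • 1).det = 0 := by
      rw [hdet (d i)]
      exact Finset.prod_eq_zero (Finset.mem_univ i) (sub_self _)
    obtain ⟨v, hvne, hv⟩ := (Matrix.exists_mulVec_eq_zero_iff).mpr hdet0
    have hXv : X *ᵥ v = d i • v := by
      have h := hv
      rw [Matrix.sub_mulVec, sub_eq_zero] at h
      rw [h, Matrix.smul_mulVec, Matrix.one_mulVec]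
    set V : Matrix (Fin n) (Fin n) ℂ := Matrix.of (fun a _ => v a) with hVdef
    have hXV : X * V = d i • V := by
      ext a b
      have := congrFun hXv a
      simpa [hVdef, Matrix.mul_apply, Matrix.mulVec, dotProduct, Matrix.smul_apply] using this
    have hVne : V ≠ 0 := by
      intro h
      apply hvne
      ext a
      have := congrFun (congrFun h a) i
      simpa [hVdef] using this
    have hNV0 : N V ≠ 0 := fun h => hVne ((hN0 V).mp h)
    have hNVnn : 0 ≤ N V := by
      have h2 : (0 : ℝ) ≤ N V + N ((-1 : ℂ) • V) := by
        rw [← hN0']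
        have : (0 : Matrix (Fin n) (Fin n) ℂ) = V + (-1 : ℂ) • V := by simp
        rw [this]
        exact hNadd _ _
      rw [hNsmul] at h2
      simp at h2
      linarith
    have hNVpos : 0 < N V := lt_of_le_of_ne hNVnn (Ne.symm hNV0)
    have hmain : ‖d i‖ * N V ≤ N X * N V := by
      calc ‖d i‖ * N V = ‖d i‖ * N V := rfl
        _ = N (d i • V) := (hNsmul _ _).symm
        _ = N (X * V) := by rw [hXV]
        _ ≤ N X * N V := hNmul _ _
    exact le_of_mul_le_mul_right hmain hNVpos
  have hdlt1 : ∀ i, ‖d i‖ < 1 := fun i => lt_of_le_of_lt (hdle i) hX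
  have h1d : ∀ i, (1 : ℂ) + d i ≠ 0 := by
    intro i h
    have hd : d i = -1 := by linear_combination h
    have hlt := hdlt1 i
    rw [hd] at hlt
    simp at hlt
  -- the tail terms
  set f : Fin n → ℕ → ℂ := fun i r => (-1) ^ (r + 1) * d i ^ r / r with hf
  set t : Fin n → ℂ := fun i =>
    Complex.log (1 + d i) - ∑ r ∈ Finset.range m, f i r with ht
  have hfsum : ∀ i, HasSum (f i) (Complex.log (1 + d i)) := fun i =>
    Complex.hasSum_taylorSeries_log (hdlt1 i)
  -- tail bound
  have htail : ∀ i, ‖t i‖ ≤ N X ^ m / m * (1 - N X)⁻¹ := by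
    intro i
    have hsummable := (hfsum i).summable
    have hshift := Summable.sum_add_tsum_nat_add m hsummable
    have htsum : ∑' r, f i r = Complex.log (1 + d i) := (hfsum i).tsum_eq
    have htformula : t i = ∑' r, f i (r + m) := by
      rw [ht]
      simp only
      rw [← htsum, ← hshift]
      ring
    rw [htformula]
    have hgeo : HasSum (fun r : ℕ => N X ^ m / m * N X ^ r)
        (N X ^ m / m * (1 - N X)⁻¹) :=
      (hasSum_geometric_of_lt_one hNXnn hX).mul_left _
    refine tsum_of_norm_bounded hgeo ?_
    intro r
    have hnorm : ‖f i (r + m)‖ = ‖d i‖ ^ (r + m) / (r + m : ℕ) := by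
      rw [hf]
      simp only
      rw [norm_div, norm_mul, norm_pow, norm_pow, norm_neg, norm_one, one_pow, one_mul,
        Complex.norm_natCast]
    rw [hnorm]
    have h1 : ‖d i‖ ^ (r + m) ≤ N X ^ (r + m) :=
      pow_le_pow_left₀ (norm_nonneg _) (hdle i) _
    have h2 : (m : ℝ) ≤ ((r + m : ℕ) : ℝ) := by
      push_cast
      linarith [Nat.cast_nonneg (α := ℝ) r]
    calc ‖d i‖ ^ (r + m) / ((r + m : ℕ) : ℝ)
        ≤ N X ^ (r + m) / (m : ℝ) :=
          div_le_div₀ (by positivity) h1 hmpos h2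
      _ = N X ^ m / m * N X ^ r := by rw [pow_add]; ring
  refine ⟨∑ i, t i, ?_, ?_⟩
  · -- the exponential identity
    have hrange : Finset.range m = insert 0 (Finset.Icc 1 (m - 1)) := by
      ext r
      simp only [Finset.mem_range, Finset.mem_insert, Finset.mem_Icc]
      omega
    have hf0 : ∀ i, f i 0 = 0 := by
      intro i
      rw [hf]
      simp
    have hsum_eq : ∀ i, ∑ r ∈ Finset.range m, f i r = ∑ r ∈ Finset.Icc 1 (m - 1), f i r := by
      intro i
      rw [hrange, Finset.sum_insert (by simp), hf0, zero_add]
    have hS : (∑ r ∈ Finset.Icc 1 (m - 1), ((-1 : ℂ) ^ (r + 1) / r) * (X ^ r).trace)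
        = ∑ i, ∑ r ∈ Finset.Icc 1 (m - 1), f i r := by
      rw [Finset.sum_comm]
      refine Finset.sum_congr rfl fun r _ => ?_
      rw [htr r, Finset.mul_sum]
      refine Finset.sum_congr rfl fun i _ => ?_
      rw [hf]
      ring
    have hcombine : (∑ r ∈ Finset.Icc 1 (m - 1), ((-1 : ℂ) ^ (r + 1) / r) * (X ^ r).trace)
        + ∑ i, t i = ∑ i, Complex.log (1 + d i) := by
      rw [hS, ← Finset.sum_add_distrib]
      refine Finset.sum_congr rfl fun i _ => ?_
      rw [ht]
      simp only
      rw [hsum_eq i]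
      ring
    rw [hcombine, Complex.exp_sum]
    have hdetX : (1 + X).det = ∏ i, (1 + d i) := by
      have h := hdet (-1)
      have h1 : X - (-1 : ℂ) • 1 = 1 + X := by
        rw [neg_smul, one_smul, sub_neg_eq_add, add_comm]
      rw [h1] at h
      rw [h]
      exact Finset.prod_congr rfl fun i _ => by rw [sub_neg_eq_add, add_comm]
    rw [hdetX]
    exact Finset.prod_congr rfl fun i _ => (Complex.exp_log (h1d i)).symm
  · -- the error bound
    calc ‖∑ i, t i‖ ≤ ∑ i, ‖t i‖ := norm_sum_le _ _
      _ ≤ ∑ _i : Fin n, N X ^ m / m * (1 - N X)⁻¹ := Finset.sum_le_sum fun i _ => htail i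
      _ = n * (N X ^ m / m * (1 - N X)⁻¹) := by
          rw [Finset.sum_const, Finset.card_univ, Fintype.card_fin, nsmul_eq_mul]
      _ = (n / m) * N X ^ m / (1 - N X) := by
          field_simp
          try ring
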